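/- Let σ₁ ≥ ⋯ ≥ σ_n ≥ 0, let k ≤ n, let γ ≥ σ₁, and suppose σ_{k+1} ≤ δ·γ for some δ ∈ [0,1]. Then for every j ≤ k, the j-th elementary symmetric polynomial satisfies e_j(σ₁², …, σ_n²) ≤ γ^{2j} · ∑_{l=0}^{j} (k choose l) (n−k)^{j−l} δ^{2(j−l)}. -/

import Mathlib

/-- for `σ₁ ≥ ⋯ ≥ σ_n ≥ 0` with `σ₁ ≤ γ` and `σ_{k+1} ≤ δ γ`
(`δ ∈ [0,1]`), every `j ≤ k` satisfies
`e_j(σ₁², …, σ_n²) ≤ γ^{2j} ∑_{l=0}^{j} C(k,l) (n-k)^{j-l} δ^{2(j-l)}`. -/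
theorem stmt15 (n k : ℕ) (hk : k < n) (σ : Fin n → ℝ)
    (hσanti : Antitone σ) (hσ0 : ∀ t, 0 ≤ σ t)
    (γ δ : ℝ) (hγ : σ ⟨0, Nat.lt_of_le_of_lt (Nat.zero_le k) hk⟩ ≤ γ)
    (hδ : δ ∈ Set.Icc (0 : ℝ) 1) (hdrop : σ ⟨k, hk⟩ ≤ δ * γ) :
    ∀ j ≤ k,
      ∑ T ∈ (Finset.univ : Finset (Fin n)).powersetCard j, ∏ t ∈ T, σ t ^ 2 ≤
        γ ^ (2 * j) *
          ∑ l ∈ Finset.range (j + 1),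
            (k.choose l : ℝ) * ((n - k : ℕ) : ℝ) ^ (j - l) * δ ^ (2 * (j - l)) := by
  intro j hj
  obtain ⟨hδ0, hδ1⟩ := hδ
  have hγ0 : 0 ≤ γ := le_trans (hσ0 _) hγ
  have hδγ0 : 0 ≤ δ * γ := mul_nonneg hδ0 hγ0
  set K : Fin n := ⟨k, hk⟩ with hK
  set S : Finset (Fin n) := Finset.Iio K with hS
  have hScard : S.card = k := by simp [hS]; rfl
  have hSccard : Sᶜ.card = n - k := by
    rw [Finset.card_compl, hScard]; simp
  set P := (Finset.univ : Finset (Fin n)).powersetCard j with hP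
  have hmaps : ∀ T ∈ P, (T.filter (· ∈ S)).card ∈ Finset.range (j + 1) := by
    intro T hT
    rw [Finset.mem_powersetCard] at hT
    rw [Finset.mem_range, Nat.lt_succ_iff, ← hT.2]
    exact Finset.card_le_card (Finset.filter_subset _ _)
  rw [← Finset.sum_fiberwise_of_maps_to hmaps (fun T => ∏ t ∈ T, σ t ^ 2)]
  rw [Finset.mul_sum]
  apply Finset.sum_le_sum
  intro l hl
  rw [Finset.mem_range, Nat.lt_succ_iff] at hl
  -- bound each term in the fiber
  have hterm : ∀ T ∈ P.filter (fun T => (T.filter (· ∈ S)).card = l),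
      ∏ t ∈ T, σ t ^ 2 ≤ γ ^ (2 * l) * (δ * γ) ^ (2 * (j - l)) := by
    intro T hT
    rw [Finset.mem_filter] at hT
    obtain ⟨hTP, hTl⟩ := hT
    rw [Finset.mem_powersetCard] at hTP
    have hTcard : T.card = j := hTP.2
    have hcard2 : (T.filter (fun t => ¬ t ∈ S)).card = j - l := by
      have := Finset.card_filter_add_card_filter_not (s := T)
        (p := (· ∈ S))
      omega
    rw [← Finset.prod_filter_mul_prod_filter_not T (· ∈ S)]
    have h1 : ∏ t ∈ T.filter (· ∈ S), σ t ^ 2 ≤ γ ^ (2 * l) := by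
      calc ∏ t ∈ T.filter (· ∈ S), σ t ^ 2 ≤ ∏ _t ∈ T.filter (· ∈ S), γ ^ 2 := by
            apply Finset.prod_le_prod
            · intro t _; positivity
            · intro t ht
              have hσt : σ t ≤ γ := by
                refine le_trans (hσanti ?_) hγ
                exact Fin.mk_le_of_le_val (Nat.zero_le _)
              exact pow_le_pow_left₀ (hσ0 t) hσt 2
        _ = γ ^ (2 * l) := by
            rw [Finset.prod_const, hTl, ← pow_mul, Nat.mul_comm]
    have h2 : ∏ t ∈ T.filter (fun t => ¬ t ∈ S), σ t ^ 2 ≤ (δ * γ) ^ (2 * (j - l)) := by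
      calc ∏ t ∈ T.filter (fun t => ¬ t ∈ S), σ t ^ 2
          ≤ ∏ _t ∈ T.filter (fun t => ¬ t ∈ S), (δ * γ) ^ 2 := by
            apply Finset.prod_le_prod
            · intro t _; positivity
            · intro t ht
              rw [Finset.mem_filter] at ht
              have hKt : K ≤ t := by
                have := ht.2
                rw [hS, Finset.mem_Iio] at this
                exact le_of_not_gt this
              have hσt : σ t ≤ δ * γ := le_trans (hσanti hKt) hdrop
              exact pow_le_pow_left₀ (hσ0 t) hσt 2
        _ = (δ * γ) ^ (2 * (j - l)) := by
            rw [Finset.prod_const, hcard2, ← pow_mul, Nat.mul_comm]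
    exact mul_le_mul h1 h2 (Finset.prod_nonneg (fun t _ => by positivity)) (by positivity)
  -- fiber cardinality bound
  have hcardfib : (P.filter (fun T => (T.filter (· ∈ S)).card = l)).card ≤
      k.choose l * (n - k).choose (j - l) := by
    have hinj : (P.filter (fun T => (T.filter (· ∈ S)).card = l)).card ≤
        (S.powersetCard l ×ˢ Sᶜ.powersetCard (j - l)).card := by
      apply Finset.card_le_card_of_injOn
        (fun T => (T.filter (· ∈ S), T.filter (fun t => ¬ t ∈ S)))
      · intro T hT
        rw [Finset.mem_coe, Finset.mem_filter] at hT
        obtain ⟨hTP, hTl⟩ := hT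
        rw [Finset.mem_powersetCard] at hTP
        have hcard2 : (T.filter (fun t => ¬ t ∈ S)).card = j - l := by
          have := Finset.card_filter_add_card_filter_not (s := T)
            (p := (· ∈ S))
          omega
        rw [Finset.mem_coe, Finset.mem_product, Finset.mem_powersetCard, Finset.mem_powersetCard]
        refine ⟨⟨?_, hTl⟩, ?_, hcard2⟩
        · intro t ht; rw [Finset.mem_filter] at ht; exact ht.2
        · intro t ht; rw [Finset.mem_filter] at ht
          simpa using ht.2
      · intro T1 h1 T2 h2 heq
        have e1 : T1.filter (· ∈ S) = T2.filter (· ∈ S) := congrArg Prod.fst heq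
        have e2 : T1.filter (fun t => ¬ t ∈ S) = T2.filter (fun t => ¬ t ∈ S) :=
          congrArg Prod.snd heq
        have := Finset.filter_union_filter_not_eq (· ∈ S) T1
        rw [← this, e1, e2, Finset.filter_union_filter_not_eq]
    refine le_trans hinj (le_of_eq ?_)
    rw [Finset.card_product, Finset.card_powersetCard, Finset.card_powersetCard,
      hScard, hSccard]
  -- combine
  refine le_trans (Finset.sum_le_card_nsmul _ _ (γ ^ (2 * l) * (δ * γ) ^ (2 * (j - l))) hterm) ?_
  rw [nsmul_eq_mul]
  have hcard' : ((P.filter (fun T => (T.filter (· ∈ S)).card = l)).card : ℝ) ≤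
      (k.choose l : ℝ) * ((n - k : ℕ) : ℝ) ^ (j - l) := by
    exact_mod_cast le_trans hcardfib (Nat.mul_le_mul_left _ (Nat.choose_le_pow _ _))
  have hrhs : γ ^ (2 * j) * ((k.choose l : ℝ) * ((n - k : ℕ) : ℝ) ^ (j - l) * δ ^ (2 * (j - l))) =
      ((k.choose l : ℝ) * ((n - k : ℕ) : ℝ) ^ (j - l)) *
        (γ ^ (2 * l) * (δ * γ) ^ (2 * (j - l))) := by
    rw [show 2 * j = 2 * l + 2 * (j - l) from by omega, pow_add, mul_pow]
    ring
  rw [hrhs]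
  exact mul_le_mul_of_nonneg_right hcard' (by positivity)
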